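/- For every natural number n ≥ 2, the free group F_n can be partitioned into countably many pairwise disjoint 5-large subsets. -/

import Mathlib

open Pointwise Cardinal

namespace FLP
open List
set_option linter.unusedSectionVars false

variable {α : Type} [DecidableEq α]

/-- No cancellation between consecutive letters `x` then `y`. -/
def Rel (x y : α × Bool) : Prop := ¬(x.1 = y.1 ∧ x.2 = !y.2)

lemma rel_self (x : α × Bool) : Rel x x := by
  rintro ⟨-, h⟩; cases hx : x.2 <;> rw [hx] at h <;> simp at h

lemma rel_symm {x y : α × Bool} (h : Rel x y) : Rel y x := by
  rintro ⟨h1, h2⟩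
  exact h ⟨h1.symm, by revert h2; cases x.2 <;> cases y.2 <;> simp⟩

lemma reduce_eq_self : ∀ {L : List (α × Bool)}, L.Chain' Rel → FreeGroup.reduce L = L
  | [], _ => rfl
  | [_], _ => rfl
  | x :: y :: L, h => by
    have h1 : Rel x y := (List.isChain_cons_cons.mp h).1
    have h2 := reduce_eq_self (List.isChain_cons_cons.mp h).2
    rw [FreeGroup.reduce.cons, h2]
    exact if_neg h1

lemma chain'_reduce : ∀ L : List (α × Bool), (FreeGroup.reduce L).Chain' Rel
  | [] => List.IsChain.nil
  | x :: L => by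
    have ih := chain'_reduce L
    rw [FreeGroup.reduce.cons]
    cases hL : FreeGroup.reduce L with
    | nil => exact List.isChain_singleton _
    | cons hd tl =>
      rw [hL] at ih
      by_cases hc : x.1 = hd.1 ∧ x.2 = !hd.2
      · simpa [hc, List.Chain'] using ih.tail
      · simpa [hc, List.Chain'] using List.isChain_cons_cons.mpr ⟨hc, ih⟩

lemma toWord_mk_of {L : List (α × Bool)} (h : L.Chain' Rel) : (FreeGroup.mk L).toWord = L := by
  rw [FreeGroup.toWord_mk, reduce_eq_self h]

lemma chain'_toWord (x : FreeGroup α) : x.toWord.Chain' Rel := by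
  rw [← FreeGroup.reduce_toWord]; exact chain'_reduce _

lemma toWord_mul {x y : FreeGroup α} (h : (x.toWord ++ y.toWord).Chain' Rel) :
    (x * y).toWord = x.toWord ++ y.toWord := by
  conv_lhs => rw [← FreeGroup.mk_toWord (x := x), ← FreeGroup.mk_toWord (x := y)]
  rw [FreeGroup.mul_mk, FreeGroup.toWord_mk, reduce_eq_self h]

lemma chain'_of_reverse {l : List (α × Bool)} (h : l.reverse.Chain' Rel) : l.Chain' Rel := by
  rw [List.Chain', List.isChain_reverse] at h
  exact h.imp (fun x y hxy => rel_symm hxy)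

variable (a b : α)

lemma relAA : Rel ((a,true) : α × Bool) (a,true) := rel_self _
lemma relBB : Rel ((b,true) : α × Bool) (b,true) := rel_self _
lemma relBA (hab : a ≠ b) : Rel ((b,true) : α × Bool) (a,true) := by
  rintro ⟨h, -⟩; exact hab h.symm
lemma relAB (hab : a ≠ b) : Rel ((a,true) : α × Bool) (b,true) := by
  rintro ⟨h, -⟩; exact hab h

/-- The marker word `b a^m b`. -/
def M (m : ℕ) : List (α × Bool) := (b, true) :: (List.replicate m (a, true) ++ [(b, true)])

/-- Prefix code: `m` if the word starts with `b a^m b` (exact run, `m ≥ 1`), else `0`. -/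
def pcode : List (α × Bool) → ℕ
  | [] => 0
  | x :: rest =>
    if x = (b, true) ∧ 1 ≤ (rest.takeWhile (· = (a, true))).length ∧
        rest[(rest.takeWhile (· = (a, true))).length]? = some (b, true)
    then (rest.takeWhile (· = (a, true))).length else 0

def scode (L : List (α × Bool)) : ℕ := pcode a b L.reverse

lemma takeWhile_rep (hab : a ≠ b) (m : ℕ) (t : List (α × Bool)) :
    ((List.replicate m (a, true) ++ (b, true) :: t).takeWhile (· = (a, true)))
      = List.replicate m (a, true) := by
  induction m with
  | zero =>
    simp only [List.replicate, List.nil_append]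
    rw [List.takeWhile_cons_of_neg]
    simp [hab.symm, Prod.ext_iff]
  | succ k ih =>
    rw [List.replicate_succ, List.cons_append, List.takeWhile_cons_of_pos (by simp), ih]

lemma pcode_M (hab : a ≠ b) (m : ℕ) (t : List (α × Bool)) :
    pcode a b (M a b m ++ t) = m := by
  have hM : M a b m ++ t = (b, true) :: (List.replicate m (a, true) ++ (b, true) :: t) := by
    simp [M]
  rw [hM]
  have hrun := takeWhile_rep a b hab m t
  have hget : (List.replicate m (a, true) ++ (b, true) :: t)[m]? = some (b, true) := by
    rw [List.getElem?_append_right (by simp)]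
    simp
  cases m with
  | zero =>
    rw [pcode, if_neg]
    rintro ⟨-, h1, -⟩
    rw [hrun] at h1; simp at h1
  | succ k =>
    rw [pcode, if_pos]
    · rw [hrun]; simp
    · refine ⟨rfl, ?_, ?_⟩ <;> rw [hrun] <;> simp [hget]

lemma M_reverse (m : ℕ) : (M a b m).reverse = M a b m := by
  simp [M, List.reverse_cons, List.reverse_append]

lemma scode_M (hab : a ≠ b) (m : ℕ) (t : List (α × Bool)) :
    scode a b (t ++ M a b m) = m := by
  unfold scode
  rw [List.reverse_append, M_reverse]
  exact pcode_M a b hab m t.reverse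

/-- number of occurrences of the letter `a` (with either sign). -/
def acount (L : List (α × Bool)) : ℕ := L.countP (fun x => x.1 = a)

/-- parity homomorphism: exponent-sum of `a` mod 2. -/
def phi : FreeGroup α →* Multiplicative (ZMod 2) :=
  FreeGroup.lift fun i => Multiplicative.ofAdd (if i = a then 1 else 0)

lemma phi_mk : ∀ L : List (α × Bool),
    phi a (FreeGroup.mk L) = Multiplicative.ofAdd ((acount a L : ℕ) : ZMod 2)
  | [] => by
    rw [← FreeGroup.one_eq_mk, map_one]
    simp [acount]
  | x :: L => by
    have ih := phi_mk L
    have hx : FreeGroup.mk (x :: L) = FreeGroup.mk [x] * FreeGroup.mk L := by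
      rw [FreeGroup.mul_mk]; rfl
    have hinv : ∀ z : Multiplicative (ZMod 2), z⁻¹ = z := by decide
    have h1 : phi a (FreeGroup.mk [x]) =
        Multiplicative.ofAdd (if x.1 = a then (1 : ZMod 2) else 0) := by
      rw [phi, FreeGroup.lift_mk]
      cases hb : x.2 <;> simp [hb, hinv]
    rw [hx, map_mul, h1, ih, ← ofAdd_add]
    congr 1
    by_cases hxa : x.1 = a <;> simp [acount, List.countP_cons, hxa, add_comm]

lemma acount_M (hab : a ≠ b) (m : ℕ) : acount a (M a b m) = m := by
  simp [acount, M, List.countP_cons, List.countP_append, hab.symm]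
  induction m with
  | zero => simp
  | succ k ih => rw [List.replicate_succ, List.countP_cons]; simp [ih]

lemma acount_append (L L' : List (α × Bool)) :
    acount a (L ++ L') = acount a L + acount a L' := List.countP_append

lemma chainM {m : ℕ} {t : List (α × Bool)} (hab : a ≠ b)
    (h : ((b, true) :: t).Chain' (Rel (α := α))) : (M a b m ++ t).Chain' Rel := by
  have he : M a b m ++ t = ((b, true) :: List.replicate m (a, true)) ++ ((b, true) :: t) := by
    simp [M]
  rw [he, List.Chain', List.isChain_append]
  refine ⟨?_, h, ?_⟩
  · cases m with
    | zero => simp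
    | succ k =>
      refine List.isChain_cons.mpr ⟨?_, List.isChain_replicate_of_rel _ (fun hp => by simp at hp)⟩
      intro y hy
      have hy' : y = (a, true) := by
        rw [List.head?_replicate] at hy; simpa using hy.symm
      rw [hy']; rintro ⟨hp, -⟩; exact hab hp.symm
  · intro x hx y hy
    have hy' : y = (b, true) := by simpa using hy.symm
    cases m with
    | zero =>
      have hx' : x = (b, true) := by simpa using hx.symm
      rw [hx', hy']; rintro ⟨-, hp⟩; simp at hp
    | succ k =>
      have hx' : x = (a, true) := by
        have he2 : (b,true) :: List.replicate (k+1) (a,true)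
            = (((b,true) :: List.replicate k (a,true)) ++ [(a,true)] : List (α × Bool)) := by
          simp [List.replicate_succ']
        rw [he2, List.getLast?_concat] at hx
        simpa using hx.symm
      rw [hx', hy']; rintro ⟨hp, -⟩; exact hab hp

/-- The coloring. -/
def col (x : FreeGroup α) : ℕ :=
  if phi a x = 1 then pcode a b x.toWord else scode a b x.toWord

lemma col_left (hab : a ≠ b) {m : ℕ} {t : List (α × Bool)} {g : FreeGroup α}
    (hc : ((b, true) :: (t ++ g.toWord)).Chain' (Rel (α := α)))
    (hphi : phi a (FreeGroup.mk (M a b m ++ t) * g) = 1) :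
    col a b (FreeGroup.mk (M a b m ++ t) * g) = m := by
  have hWt : (M a b m ++ (t ++ g.toWord)).Chain' Rel := chainM a b hab hc
  have hW : (M a b m ++ t).Chain' Rel := by
    refine hWt.prefix ?_
    rw [← List.append_assoc]
    exact (M a b m ++ t).prefix_append g.toWord
  have h1 : (FreeGroup.mk (M a b m ++ t)).toWord = M a b m ++ t := toWord_mk_of hW
  have h2 : (FreeGroup.mk (M a b m ++ t) * g).toWord = (M a b m ++ t) ++ g.toWord := by
    conv_rhs => rw [← h1]
    apply toWord_mul
    rw [h1, List.append_assoc]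
    exact hWt
  unfold col
  rw [if_pos hphi, h2, List.append_assoc]
  exact pcode_M a b hab m _

lemma col_right (hab : a ≠ b) {m : ℕ} {t : List (α × Bool)} {g : FreeGroup α}
    (hc : (g.toWord ++ (t ++ M a b m)).Chain' (Rel (α := α)))
    (hphi : phi a (g * FreeGroup.mk (t ++ M a b m)) ≠ 1) :
    col a b (g * FreeGroup.mk (t ++ M a b m)) = m := by
  have hV : (t ++ M a b m).Chain' Rel := hc.suffix (List.suffix_append _ _)
  have h1 : (FreeGroup.mk (t ++ M a b m)).toWord = t ++ M a b m := toWord_mk_of hV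
  have h2 : (g * FreeGroup.mk (t ++ M a b m)).toWord = g.toWord ++ (t ++ M a b m) := by
    conv_rhs => rw [← h1]
    apply toWord_mul
    rw [h1]
    exact hc
  unfold col
  rw [if_neg hphi, h2]
  unfold scode
  rw [List.reverse_append, List.reverse_append, M_reverse, List.append_assoc]
  exact pcode_M a b hab m _

lemma two_elt : ∀ z w : ZMod 2, z ≠ w → z = w + 1 := by decide

lemma add_self_two : ∀ w : ZMod 2, w + w = 0 := by decide

lemma zh1 (z u : ZMod 2) (h : u = 0) : (z + u) + z = 0 := by
  rw [h, add_zero]; exact add_self_two z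

lemma zh2 (z u : ZMod 2) (h : u = 1) : (z + u) + (z + 1) = 0 := by
  rw [h]; exact add_self_two (z + 1)

lemma ofAdd_mul (p q : ZMod 2) :
    Multiplicative.ofAdd p * Multiplicative.ofAdd q = Multiplicative.ofAdd (p + q) :=
  rfl

lemma left_cover (hab : a ≠ b) (m : ℕ) (g : FreeGroup α) :
    ∃ t ∈ ({[], [(a,true),(a,true)], [(a,true)], [(a,true),(b,true)]} :
        Set (List (α × Bool))),
      col a b (FreeGroup.mk (M a b m ++ t) * g) = m := by
  have hL := chain'_toWord g
  -- safety: at least one of the letters a, b can precede the word of g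
  have hsafe : (∀ y ∈ g.toWord.head?, Rel ((a, true) : α × Bool) y) ∨
      (∀ y ∈ g.toWord.head?, Rel ((b, true) : α × Bool) y) := by
    cases hh : g.toWord.head? with
    | none => left; simp
    | some y =>
      by_cases hy : y = (a, false)
      · right
        intro z hz
        have hz' : z = y := by simpa using hz.symm
        rw [hz', hy]; rintro ⟨hp, -⟩; exact hab hp.symm
      · left
        intro z hz
        have hz' : z = y := by simpa using hz.symm
        subst hz'
        rintro ⟨hp, hq⟩
        apply hy
        have h2 : z.2 = false := by revert hq; cases z.2 <;> simp
        have h1 : z.1 = a := hp.symm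
        obtain ⟨z1, z2⟩ := z
        simp only at h1 h2
        rw [h1, h2]
  -- the four candidate chains
  have chain_nil : (∀ y ∈ g.toWord.head?, Rel ((b, true) : α × Bool) y) →
      (((b,true) : α × Bool) :: ([] ++ g.toWord)).Chain' Rel := fun hs => by
    simpa [List.Chain'] using List.isChain_cons.mpr ⟨hs, hL⟩
  have chain_aa : (∀ y ∈ g.toWord.head?, Rel ((a, true) : α × Bool) y) →
      (((b,true) : α × Bool) :: ([(a,true),(a,true)] ++ g.toWord)).Chain' Rel := fun hs =>
    List.isChain_cons_cons.mpr ⟨relBA a b hab, List.isChain_cons_cons.mpr ⟨relAA a,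
      List.isChain_cons.mpr ⟨hs, hL⟩⟩⟩
  have chain_a : (∀ y ∈ g.toWord.head?, Rel ((a, true) : α × Bool) y) →
      (((b,true) : α × Bool) :: ([(a,true)] ++ g.toWord)).Chain' Rel := fun hs =>
    List.isChain_cons_cons.mpr ⟨relBA a b hab, List.isChain_cons.mpr ⟨hs, hL⟩⟩
  have chain_ab : (∀ y ∈ g.toWord.head?, Rel ((b, true) : α × Bool) y) →
      (((b,true) : α × Bool) :: ([(a,true),(b,true)] ++ g.toWord)).Chain' Rel := fun hs =>
    List.isChain_cons_cons.mpr ⟨relBA a b hab, List.isChain_cons_cons.mpr ⟨relAB a b hab,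
      List.isChain_cons.mpr ⟨hs, hL⟩⟩⟩
  -- parity computation
  have hcount : ∀ t : List (α × Bool),
      phi a (FreeGroup.mk (M a b m ++ t) * g) =
        Multiplicative.ofAdd (((m : ℕ) : ZMod 2) + ((acount a t : ℕ) : ZMod 2)) * phi a g := by
    intro t
    rw [map_mul, phi_mk, acount_append, acount_M a b hab]
    push_cast
    rfl
  by_cases hpar : phi a g = Multiplicative.ofAdd ((m : ℕ) : ZMod 2)
  · -- even pair: t ∈ {[], [(a,true),(a,true)]}
    rcases hsafe with hsA | hsB
    · refine ⟨[(a,true),(a,true)], by simp, col_left a b hab (chain_aa hsA) ?_⟩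
      rw [hcount, hpar, ofAdd_mul, ofAdd_eq_one]
      refine zh1 _ _ ?_
      have h2 : (acount a [((a:α),true),(a,true)] : ℕ) = 2 := by simp [acount]
      rw [h2]; decide
    · refine ⟨[], by simp, col_left a b hab (chain_nil hsB) ?_⟩
      rw [hcount, hpar, ofAdd_mul, ofAdd_eq_one]
      refine zh1 _ _ ?_
      have h2 : (acount a ([] : List (α × Bool)) : ℕ) = 0 := by simp [acount]
      rw [h2]; decide
  · -- odd pair: t ∈ {[(a,true)], [(a,true),(b,true)]}
    have hpar' : phi a g = Multiplicative.ofAdd (((m : ℕ) : ZMod 2) + 1) := by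
      have h1 : Multiplicative.toAdd (phi a g) ≠ ((m : ℕ) : ZMod 2) := by
        intro h; apply hpar
        rw [← h]; exact (ofAdd_toAdd _).symm
      have h2 := two_elt (Multiplicative.toAdd (phi a g)) _ h1
      rw [← ofAdd_toAdd (phi a g), h2]
    rcases hsafe with hsA | hsB
    · refine ⟨[(a,true)], by simp, col_left a b hab (chain_a hsA) ?_⟩
      rw [hcount, hpar', ofAdd_mul, ofAdd_eq_one]
      refine zh2 _ _ ?_
      have h2 : (acount a [((a:α),true)] : ℕ) = 1 := by simp [acount]
      rw [h2]; decide
    · refine ⟨[(a,true),(b,true)], by simp, col_left a b hab (chain_ab hsB) ?_⟩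
      rw [hcount, hpar', ofAdd_mul, ofAdd_eq_one]
      refine zh2 _ _ ?_
      have h2 : (acount a [((a:α),true),(b,true)] : ℕ) = 1 := by simp [acount, hab.symm]
      rw [h2]; decide

lemma right_cover (hab : a ≠ b) (m : ℕ) (g : FreeGroup α) :
    ∃ t ∈ ({[], [(a,true),(a,true)], [(a,true)], [(b,true),(a,true)]} :
        Set (List (α × Bool))),
      col a b (g * FreeGroup.mk (t ++ M a b m)) = m := by
  have hL := chain'_toWord g
  -- safety: at least one of the letters a, b can follow the word of g
  have hsafe : (∀ x ∈ g.toWord.getLast?, Rel x ((a, true) : α × Bool)) ∨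
      (∀ x ∈ g.toWord.getLast?, Rel x ((b, true) : α × Bool)) := by
    cases hh : g.toWord.getLast? with
    | none => left; simp
    | some y =>
      by_cases hy : y = (a, false)
      · right
        intro z hz
        have hz' : z = y := by simpa using hz.symm
        rw [hz', hy]; rintro ⟨hp, -⟩; exact hab hp
      · left
        intro z hz
        have hz' : z = y := by simpa using hz.symm
        subst hz'
        rintro ⟨hp, hq⟩
        apply hy
        have h2 : z.2 = false := by revert hq; cases z.2 <;> simp
        obtain ⟨z1, z2⟩ := z
        simp only at hp h2
        rw [hp, h2]
  -- chains for the four candidate suffixes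
  have chainV : ∀ t : List (α × Bool), (((b,true) : α × Bool) :: t.reverse).Chain' Rel →
      (t ++ M a b m).Chain' Rel := by
    intro t ht
    apply chain'_of_reverse
    rw [List.reverse_append, M_reverse]
    exact chainM a b hab ht
  have hV_nil : (([] : List (α × Bool)) ++ M a b m).Chain' Rel := by
    apply chainV; simp [List.Chain']
  have hV_aa : ([((a:α),true),(a,true)] ++ M a b m).Chain' Rel := by
    apply chainV
    exact List.isChain_cons_cons.mpr ⟨relBA a b hab, List.isChain_cons_cons.mpr ⟨relAA a, List.isChain_singleton _⟩⟩
  have hV_a : ([((a:α),true)] ++ M a b m).Chain' Rel := by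
    apply chainV
    exact List.isChain_cons_cons.mpr ⟨relBA a b hab, List.isChain_singleton _⟩
  have hV_ba : ([((b:α),true),(a,true)] ++ M a b m).Chain' Rel := by
    apply chainV
    exact List.isChain_cons_cons.mpr ⟨relBA a b hab, List.isChain_cons_cons.mpr ⟨relAB a b hab, List.isChain_singleton _⟩⟩
  -- full chains given safety
  have full_chain : ∀ t : List (α × Bool), (t ++ M a b m).Chain' Rel →
      (∀ x ∈ g.toWord.getLast?, ∀ y ∈ (t ++ M a b m).head?, Rel x y) →
      (g.toWord ++ (t ++ M a b m)).Chain' Rel := by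
    intro t h1 h2
    exact List.isChain_append.mpr ⟨hL, h1, h2⟩
  -- parity computation
  have hcount : ∀ t : List (α × Bool),
      phi a (g * FreeGroup.mk (t ++ M a b m)) =
        phi a g * Multiplicative.ofAdd (((acount a t : ℕ) : ZMod 2) + ((m : ℕ) : ZMod 2)) := by
    intro t
    rw [map_mul, phi_mk, acount_append, acount_M a b hab]
    push_cast
    rfl
  have hone : (1 : Multiplicative (ZMod 2)) = Multiplicative.ofAdd 0 := rfl
  have hofadd_ne : Multiplicative.ofAdd (1 : ZMod 2) ≠ 1 := by decide
  by_cases hpar : phi a g = Multiplicative.ofAdd (((m : ℕ) : ZMod 2) + 1)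
  · -- g has parity m+1 : use t with even a-count
    rcases hsafe with hsA | hsB
    · refine ⟨[(a,true),(a,true)], by simp, col_right a b hab (full_chain _ hV_aa ?_) ?_⟩
      · intro x hx y hy
        have hy' : y = (a, true) := by simpa using hy.symm
        rw [hy']; exact hsA x hx
      · rw [hcount, hpar, ofAdd_mul]
        have h2 : (acount a [((a:α),true),(a,true)] : ℕ) = 2 := by simp [acount]
        rw [h2]
        have h3 : (((m : ℕ) : ZMod 2) + 1) + (((2:ℕ) : ZMod 2) + ((m : ℕ) : ZMod 2))
            = 1 := by
          have := add_self_two ((m : ℕ) : ZMod 2)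
          have h4 : ((2:ℕ) : ZMod 2) = 0 := by decide
          rw [h4]; ring_nf
          rw [mul_two, this, add_zero]
        rw [h3]
        exact hofadd_ne
    · refine ⟨[], by simp, col_right a b hab (full_chain _ hV_nil ?_) ?_⟩
      · intro x hx y hy
        have hy' : y = (b, true) := by simpa [M] using hy.symm
        rw [hy']; exact hsB x hx
      · rw [hcount, hpar, ofAdd_mul]
        have h2 : (acount a ([] : List (α × Bool)) : ℕ) = 0 := by simp [acount]
        rw [h2]
        have h3 : (((m : ℕ) : ZMod 2) + 1) + (((0:ℕ) : ZMod 2) + ((m : ℕ) : ZMod 2))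
            = 1 := by
          have := add_self_two ((m : ℕ) : ZMod 2)
          have h4 : ((0:ℕ) : ZMod 2) = 0 := by decide
          rw [h4]; ring_nf
          rw [mul_two, this, add_zero]
        rw [h3]
        exact hofadd_ne
  · -- g has parity m : use t with odd a-count
    have hpar' : phi a g = Multiplicative.ofAdd ((m : ℕ) : ZMod 2) := by
      have h1 : Multiplicative.toAdd (phi a g) ≠ ((m : ℕ) : ZMod 2) + 1 := by
        intro h; apply hpar
        rw [← h]; exact (ofAdd_toAdd _).symm
      have h2 : ∀ z w : ZMod 2, z ≠ w + 1 → z = w := by decide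
      have h3 := h2 (Multiplicative.toAdd (phi a g)) _ h1
      rw [← ofAdd_toAdd (phi a g), h3]
    rcases hsafe with hsA | hsB
    · refine ⟨[(a,true)], by simp, col_right a b hab (full_chain _ hV_a ?_) ?_⟩
      · intro x hx y hy
        have hy' : y = (a, true) := by simpa using hy.symm
        rw [hy']; exact hsA x hx
      · rw [hcount, hpar', ofAdd_mul]
        have h2 : (acount a [((a:α),true)] : ℕ) = 1 := by simp [acount]
        rw [h2]
        have h3 : ((m : ℕ) : ZMod 2) + (((1:ℕ) : ZMod 2) + ((m : ℕ) : ZMod 2)) = 1 := by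
          have := add_self_two ((m : ℕ) : ZMod 2)
          have h4 : ((1:ℕ) : ZMod 2) = 1 := by decide
          rw [h4, add_comm 1, ← add_assoc, this, zero_add]
        rw [h3]
        exact hofadd_ne
    · refine ⟨[(b,true),(a,true)], by simp, col_right a b hab (full_chain _ hV_ba ?_) ?_⟩
      · intro x hx y hy
        have hy' : y = (b, true) := by simpa using hy.symm
        rw [hy']; exact hsB x hx
      · rw [hcount, hpar', ofAdd_mul]
        have h2 : (acount a [((b:α),true),(a,true)] : ℕ) = 1 := by simp [acount, hab.symm]
        rw [h2]
        have h3 : ((m : ℕ) : ZMod 2) + (((1:ℕ) : ZMod 2) + ((m : ℕ) : ZMod 2)) = 1 := by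
          have := add_self_two ((m : ℕ) : ZMod 2)
          have h4 : ((1:ℕ) : ZMod 2) = 1 := by decide
          rw [h4, add_comm 1, ← add_assoc, this, zero_add]
        rw [h3]
        exact hofadd_ne

lemma mk_four_le {β : Type} (x1 x2 x3 x4 : β) : #({x1, x2, x3, x4} : Set β) ≤ 4 := by
  calc #({x1, x2, x3, x4} : Set β) ≤ #({x2, x3, x4} : Set β) + 1 := Cardinal.mk_insert_le
    _ ≤ (#({x3, x4} : Set β) + 1) + 1 := add_le_add_left Cardinal.mk_insert_le 1
    _ ≤ ((#({x4} : Set β) + 1) + 1) + 1 :=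
        add_le_add_left (add_le_add_left Cardinal.mk_insert_le 1) 1
    _ = 4 := by rw [Cardinal.mk_singleton]; norm_num

end FLP

theorem free_group_fin_partition_five_large (n : ℕ) (hn : 2 ≤ n) :
    ∃ P : ℕ → Set (FreeGroup (Fin n)),
      Pairwise (Function.onFun Disjoint P) ∧
      (⋃ m, P m) = Set.univ ∧
      ∀ m, (∃ F : Set (FreeGroup (Fin n)), #F ≤ 4 ∧ F * P m = Set.univ) ∧
           (∃ F' : Set (FreeGroup (Fin n)), #F' ≤ 4 ∧ P m * F' = Set.univ) := by
  have h0 : 0 < n := by omega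
  have h1 : 1 < n := by omega
  set a : Fin n := ⟨0, h0⟩ with ha
  set b : Fin n := ⟨1, h1⟩ with hb
  have hab : a ≠ b := by
    intro h
    rw [ha, hb, Fin.mk.injEq] at h
    omega
  refine ⟨fun m => {x | FLP.col a b x = m}, ?_, ?_, ?_⟩
  · intro i j hij
    simp only [Function.onFun]
    rw [Set.disjoint_left]
    rintro x hx hx'
    exact hij (hx.symm.trans hx')
  · ext x
    simp only [Set.mem_iUnion, Set.mem_univ, iff_true]
    exact ⟨FLP.col a b x, rfl⟩
  · intro m
    constructor
    · refine ⟨(·⁻¹) '' {FreeGroup.mk (FLP.M a b m),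
        FreeGroup.mk (FLP.M a b m ++ [(a,true),(a,true)]),
        FreeGroup.mk (FLP.M a b m ++ [(a,true)]),
        FreeGroup.mk (FLP.M a b m ++ [(a,true),(b,true)])},
        le_trans Cardinal.mk_image_le (FLP.mk_four_le _ _ _ _), ?_⟩
      apply Set.eq_univ_of_forall
      intro g
      obtain ⟨t, ht, hcol⟩ := FLP.left_cover a b hab m g
      refine Set.mem_mul.mpr ⟨(FreeGroup.mk (FLP.M a b m ++ t))⁻¹, ?_,
        FreeGroup.mk (FLP.M a b m ++ t) * g, hcol, inv_mul_cancel_left _ _⟩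
      apply Set.mem_image_of_mem
      simp only [Set.mem_insert_iff, Set.mem_singleton_iff] at ht
      rcases ht with rfl | rfl | rfl | rfl <;> simp
    · refine ⟨(·⁻¹) '' {FreeGroup.mk (FLP.M a b m),
        FreeGroup.mk ([(a,true),(a,true)] ++ FLP.M a b m),
        FreeGroup.mk ([(a,true)] ++ FLP.M a b m),
        FreeGroup.mk ([(b,true),(a,true)] ++ FLP.M a b m)},
        le_trans Cardinal.mk_image_le (FLP.mk_four_le _ _ _ _), ?_⟩
      apply Set.eq_univ_of_forall
      intro g
      obtain ⟨t, ht, hcol⟩ := FLP.right_cover a b hab m g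
      refine Set.mem_mul.mpr ⟨g * FreeGroup.mk (t ++ FLP.M a b m), hcol,
        (FreeGroup.mk (t ++ FLP.M a b m))⁻¹, ?_, mul_inv_cancel_right _ _⟩
      apply Set.mem_image_of_mem
      simp only [Set.mem_insert_iff, Set.mem_singleton_iff] at ht
      rcases ht with rfl | rfl | rfl | rfl <;> simp
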